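/- Let G be a 3-graph on n vertices with the property that for all sets A_1, A_2, A_3 ⊆ V(G), each of size at least n/100, there exist an edge e ∈ E(G) and three distinct vertices x, y, z with e = {x,y,z}, x ∈ A_1, y ∈ A_2 and z ∈ A_3. Then G ∉ U. -/

import Mathlib

/-- A 3-uniform hypergraph with vertices drawn from ℕ. -/
structure ThreeGraph where
  verts : Finset ℕ
  edges : Finset (Finset ℕ)
  edge_card : ∀ e ∈ edges, e.card = 3
  edge_sub : ∀ e ∈ edges, e ⊆ verts

/-- A 3-graph is tripartite if its vertex set can be partitioned into three parts so that
every edge has exactly one vertex in each part. -/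
def Tripartite (G : ThreeGraph) : Prop :=
  ∃ V1 V2 V3 : Finset ℕ,
    Disjoint V1 V2 ∧ Disjoint V1 V3 ∧ Disjoint V2 V3 ∧
    V1 ∪ V2 ∪ V3 = G.verts ∧
    ∀ e ∈ G.edges, (e ∩ V1).card = 1 ∧ (e ∩ V2).card = 1 ∧ (e ∩ V3).card = 1

/-- Membership in the family 𝒰₁: there is a vertex subset intersecting every edge in
exactly one vertex. -/
def InU1 (G : ThreeGraph) : Prop :=
  ∃ W : Finset ℕ, W ⊆ G.verts ∧ ∀ e ∈ G.edges, (e ∩ W).card = 1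

/-- `Reducible G H F` : `G` is reducible to the pair `(H, F)` by collapsing a collapsible
set `U` (with `F = G[U]`), where the new vertex of `H` is `v`. -/
def Reducible (G H F : ThreeGraph) : Prop :=
  ∃ (U : Finset ℕ) (v : ℕ),
    U ⊆ G.verts ∧ 2 ≤ U.card ∧ U.card < G.verts.card ∧
    (∀ e ∈ G.edges, (e ∩ U).card ≠ 2) ∧
    v ∉ G.verts ∧
    H.verts = (G.verts \ U) ∪ {v} ∧
    H.edges = G.edges.filter (fun e => e ∩ U = ∅) ∪
      (G.edges.filter (fun e => (e ∩ U).card = 1)).image (fun e => (e \ U) ∪ {v}) ∧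
    F.verts = U ∧
    F.edges = G.edges.filter (fun e => e ⊆ U)

/-- `MemU i G` means `G ∈ 𝒰ᵢ`: `𝒰₀` is the family of tripartite 3-graphs, `𝒰₁` of 3-graphs
with a vertex set meeting every edge exactly once, the families are nested, and for `i ≥ 2`,
`G ∈ 𝒰ᵢ` whenever `G` is reducible to `(H, F)` with `H ∈ 𝒰ᵢ₋₁` and `F ∈ 𝒰ᵢ`. -/
inductive MemU : ℕ → ThreeGraph → Prop where
  | zero (G : ThreeGraph) : Tripartite G → MemU 0 G
  | one (G : ThreeGraph) : InU1 G → MemU 1 G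
  | mono (i : ℕ) (G : ThreeGraph) : MemU i G → MemU (i + 1) G
  | reduce (i : ℕ) (G H F : ThreeGraph) :
      Reducible G H F → MemU (i + 1) H → MemU (i + 2) F → MemU (i + 2) G

/-- `G ∈ 𝒰 = ⋃ᵢ 𝒰ᵢ`. -/
def InU (G : ThreeGraph) : Prop := ∃ i, MemU i G

open Finset

/-- A monochromatic copy of `G` in color `i` under the coloring `χ` of the triples of
`Fin N`. -/
def MonoCopy {N q : ℕ} (χ : Finset (Fin N) → Fin q) (i : Fin q) (G : ThreeGraph) : Prop :=
  ∃ f : ℕ → Fin N, Set.InjOn f ↑G.verts ∧ ∀ e ∈ G.edges, χ (e.image f) = i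

/-- `N` vertices suffice to find, in any `q`-coloring, a monochromatic copy of `Gs i` in
color `i` for some `i`. -/
def RamseyProp {q : ℕ} (Gs : Fin q → ThreeGraph) (N : ℕ) : Prop :=
  ∀ χ : Finset (Fin N) → Fin q, ∃ i : Fin q, MonoCopy χ i (Gs i)

/-- The Ramsey number `r(G₁, …, G_q)`. -/
noncomputable def ramseyNumber {q : ℕ} (Gs : Fin q → ThreeGraph) : ℕ :=
  sInf {N | RamseyProp Gs N}

/-- The `q`-color Ramsey number `r(G; q)`. -/
noncomputable def rq (G : ThreeGraph) (q : ℕ) : ℕ :=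
  ramseyNumber (fun _ : Fin q => G)



lemma triple_card {x y z : ℕ} (hxy : x ≠ y) (hxz : x ≠ z) (hyz : y ≠ z) :
    ({x, y, z} : Finset ℕ).card = 3 := by
  rw [Finset.card_insert_of_notMem (by simp [hxy, hxz]),
      Finset.card_insert_of_notMem (by simp [hyz]), Finset.card_singleton]

lemma triple_swap12 (x y z : ℕ) : ({x, y, z} : Finset ℕ) = {y, x, z} := by
  ext w; simp; tauto

lemma triple_rot (x y z : ℕ) : ({x, y, z} : Finset ℕ) = {z, x, y} := by
  ext w; simp; tauto

lemma inter_pair {x y z : ℕ} {s : Finset ℕ} (hx : x ∈ s) (hy : y ∈ s) (hz : z ∉ s) :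
    ({x, y, z} : Finset ℕ) ∩ s = {x, y} := by
  ext w
  simp only [mem_inter, mem_insert, mem_singleton]
  constructor
  · rintro ⟨rfl | rfl | rfl, hw⟩
    · exact Or.inl rfl
    · exact Or.inr rfl
    · exact absurd hw hz
  · rintro (rfl | rfl)
    · exact ⟨Or.inl rfl, hx⟩
    · exact ⟨Or.inr (Or.inl rfl), hy⟩

lemma inter_pair_card {x y z : ℕ} {s : Finset ℕ} (hxy : x ≠ y) (hx : x ∈ s) (hy : y ∈ s)
    (hz : z ∉ s) : (({x, y, z} : Finset ℕ) ∩ s).card = 2 := by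
  rw [inter_pair hx hy hz, Finset.card_pair hxy]

lemma inter_single {d p q : ℕ} {s : Finset ℕ} (hd : d ∈ s) (hp : p ∉ s) (hq : q ∉ s) :
    ({d, p, q} : Finset ℕ) ∩ s = {d} := by
  ext w
  simp only [mem_inter, mem_insert, mem_singleton]
  constructor
  · rintro ⟨rfl | rfl | rfl, hw⟩
    · rfl
    · exact absurd hw hp
    · exact absurd hw hq
  · rintro rfl
    exact ⟨Or.inl rfl, hd⟩

lemma inter_none {a b c : ℕ} {s : Finset ℕ} (ha : a ∉ s) (hb : b ∉ s) (hc : c ∉ s) :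
    ({a, b, c} : Finset ℕ) ∩ s = ∅ := by
  ext w
  simp only [mem_inter, mem_insert, mem_singleton, notMem_empty, iff_false, not_and]
  rintro (rfl | rfl | rfl) <;> assumption

lemma exists_mid (t : ℕ) (ht : 1 ≤ t) (f : ℕ → ℕ) :
    ∀ s : Finset ℕ, (∀ a ∈ s, f a < t) → t ≤ ∑ a ∈ s, f a →
    ∃ u, u ⊆ s ∧ t ≤ ∑ a ∈ u, f a ∧ ∑ a ∈ u, f a < 2 * t := by
  intro s
  induction s using Finset.induction_on with
  | empty => intro _ h; simp at h; omega
  | insert a s' ha ih =>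
    intro hf hsum
    by_cases h : t ≤ ∑ x ∈ s', f x
    · obtain ⟨u, hu, h1, h2⟩ := ih (fun x hx => hf x (mem_insert_of_mem hx)) h
      exact ⟨u, hu.trans (subset_insert _ _), h1, h2⟩
    · refine ⟨insert a s', Finset.Subset.refl _, hsum, ?_⟩
      rw [Finset.sum_insert ha] at hsum ⊢
      have := hf a (mem_insert_self _ _)
      omega
/-- The models used in the proof of stmt12: `K` is a graph derived from `G` by repeated
collapsing/restriction; `φ` maps its vertices to disjoint small classes of real vertices,
`Z` is a small set of discarded real vertices. -/
structure GoodModel (G : ThreeGraph) (t : ℕ) (K : ThreeGraph) (φ : ℕ → Finset ℕ)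
    (Z : Finset ℕ) : Prop where
  class_sub : ∀ a ∈ K.verts, φ a ⊆ G.verts
  class_ne : ∀ a ∈ K.verts, (φ a).Nonempty
  class_small : ∀ a ∈ K.verts, (φ a).card < t
  class_disj : ∀ a ∈ K.verts, ∀ b ∈ K.verts, a ≠ b → Disjoint (φ a) (φ b)
  Z_small : Z.card < t
  Z_disj : ∀ a ∈ K.verts, Disjoint (φ a) Z
  cover : G.verts = Z ∪ K.verts.biUnion φ
  M : ∀ a ∈ K.verts, ∀ b ∈ K.verts, ∀ c ∈ K.verts, a ≠ b → a ≠ c → b ≠ c →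
      ∀ x ∈ φ a, ∀ y ∈ φ b, ∀ z ∈ φ c,
      ({x, y, z} : Finset ℕ) ∈ G.edges → ({a, b, c} : Finset ℕ) ∈ K.edges
  Q : ∀ a ∈ K.verts, ∀ e ∈ G.edges, (e ∩ φ a).card ≠ 2
  Zp : ∀ a ∈ K.verts, ∀ b ∈ K.verts, a ≠ b → ∀ x ∈ φ a, ∀ y ∈ φ b, ∀ z ∈ Z,
      ({x, y, z} : Finset ℕ) ∉ G.edges

/-- Spread property with absolute threshold `t`. -/
def SpreadT (G : ThreeGraph) (t : ℕ) : Prop :=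
  ∀ A1 A2 A3 : Finset ℕ, A1 ⊆ G.verts → A2 ⊆ G.verts → A3 ⊆ G.verts →
    t ≤ A1.card → t ≤ A2.card → t ≤ A3.card →
    ∃ x ∈ A1, ∃ y ∈ A2, ∃ z ∈ A3, x ≠ y ∧ x ≠ z ∧ y ≠ z ∧
      ({x, y, z} : Finset ℕ) ∈ G.edges

namespace GoodModel

variable {G : ThreeGraph} {t : ℕ} {K : ThreeGraph} {φ : ℕ → Finset ℕ} {Z : Finset ℕ}

lemma card_biUnion' (hM : GoodModel G t K φ Z) {B : Finset ℕ} (hB : B ⊆ K.verts) :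
    (B.biUnion φ).card = ∑ a ∈ B, (φ a).card :=
  Finset.card_biUnion (fun x hx y hy hxy => hM.class_disj x (hB hx) y (hB hy) hxy)

lemma biUnion_sub (hM : GoodModel G t K φ Z) {B : Finset ℕ} (hB : B ⊆ K.verts) :
    B.biUnion φ ⊆ G.verts := by
  intro x hx
  obtain ⟨a, ha, hxa⟩ := mem_biUnion.1 hx
  exact hM.class_sub a (hB ha) hxa

lemma Z_sub (hM : GoodModel G t K φ Z) : Z ⊆ G.verts := by
  rw [hM.cover]; exact subset_union_left

lemma total (hM : GoodModel G t K φ Z) :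
    Z.card + ∑ a ∈ K.verts, (φ a).card = G.verts.card := by
  rw [← hM.card_biUnion' (Finset.Subset.refl _), hM.cover,
    Finset.card_union_of_disjoint]
  rw [Finset.disjoint_biUnion_right]
  exact fun a ha => (hM.Z_disj a ha).symm

lemma weight_big (hM : GoodModel G t K φ Z) (hn : 10 * t ≤ G.verts.card) :
    9 * t + 1 ≤ ∑ a ∈ K.verts, (φ a).card := by
  have h1 := hM.total
  have h2 := hM.Z_small
  omega

lemma locate (hM : GoodModel G t K φ Z) {z : ℕ} (hz : z ∈ G.verts) :
    z ∈ Z ∨ ∃ c ∈ K.verts, z ∈ φ c := by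
  rw [hM.cover] at hz
  rcases Finset.mem_union.1 hz with h | h
  · exact Or.inl h
  · exact Or.inr (mem_biUnion.1 h)

end GoodModel
-- the "no rainbow triple of classes within P" contradiction
lemma helperA {G t K φ Z} (hs : SpreadT G t) (ht : 1 ≤ t) (hM : GoodModel G t K φ Z)
    {P : Finset ℕ} (hP : P ⊆ K.verts) (hw : 5 * t ≤ ∑ a ∈ P, (φ a).card)
    (hno : ∀ a ∈ P, ∀ b ∈ P, ∀ c ∈ P, ({a, b, c} : Finset ℕ) ∉ K.edges) : False := by
  have hf : ∀ a ∈ P, (φ a).card < t := fun a ha => hM.class_small a (hP ha)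
  obtain ⟨u1, hu1P, hu1a, hu1b⟩ := exists_mid t ht _ P hf (by omega)
  have hsd1 : ∑ a ∈ P \ u1, (φ a).card + ∑ a ∈ u1, (φ a).card = ∑ a ∈ P, (φ a).card :=
    Finset.sum_sdiff hu1P
  obtain ⟨u2, hu2P, hu2a, hu2b⟩ := exists_mid t ht _ (P \ u1)
    (fun a ha => hf a (Finset.mem_sdiff.1 ha).1) (by omega)
  have hsd2 : ∑ a ∈ (P \ u1) \ u2, (φ a).card + ∑ a ∈ u2, (φ a).card
      = ∑ a ∈ P \ u1, (φ a).card := Finset.sum_sdiff hu2P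
  set u3 := (P \ u1) \ u2 with hu3def
  have hu3P : u3 ⊆ P := fun a ha =>
    (Finset.mem_sdiff.1 (Finset.mem_sdiff.1 ha).1).1
  have hu1K : u1 ⊆ K.verts := hu1P.trans hP
  have hu2K : u2 ⊆ K.verts := (hu2P.trans (Finset.sdiff_subset)).trans hP
  have hu3K : u3 ⊆ K.verts := hu3P.trans hP
  obtain ⟨x, hx, y, hy, z, hz, hxy, hxz, hyz, hedge⟩ :=
    hs (u1.biUnion φ) (u2.biUnion φ) (u3.biUnion φ)
      (hM.biUnion_sub hu1K) (hM.biUnion_sub hu2K) (hM.biUnion_sub hu3K)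
      (by rw [hM.card_biUnion' hu1K]; omega)
      (by rw [hM.card_biUnion' hu2K]; omega)
      (by rw [hM.card_biUnion' hu3K]; omega)
  obtain ⟨a, ha, hxa⟩ := mem_biUnion.1 hx
  obtain ⟨b, hb, hyb⟩ := mem_biUnion.1 hy
  obtain ⟨c, hc, hzc⟩ := mem_biUnion.1 hz
  have hb' := Finset.mem_sdiff.1 (hu2P hb)
  have hc' := Finset.mem_sdiff.1 hc
  have hc'' := Finset.mem_sdiff.1 hc'.1
  have hab : a ≠ b := fun h => hb'.2 (h ▸ ha)
  have hac : a ≠ c := fun h => hc''.2 (h ▸ ha)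
  have hbc : b ≠ c := fun h => hc'.2 (h ▸ hb)
  exact hno a (hu1P ha) b ((hu2P.trans Finset.sdiff_subset) hb) c (hu3P hc)
    (hM.M a (hu1K ha) b (hu2K hb) c (hu3K hc) hab hac hbc x hxa y hyb z hzc hedge)

lemma contra_reduce {G t K φ Z} (hs : SpreadT G t) (hM : GoodModel G t K φ Z)
    {U : Finset ℕ} (hU : U ⊆ K.verts)
    (hcoll : ∀ e ∈ K.edges, (e ∩ U).card ≠ 2)
    (hw : t ≤ ∑ a ∈ U, (φ a).card)
    (hz : t ≤ (Z ∪ (K.verts \ U).biUnion φ).card) : False := by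
  have hA3sub : Z ∪ (K.verts \ U).biUnion φ ⊆ G.verts := by
    apply Finset.union_subset hM.Z_sub (hM.biUnion_sub Finset.sdiff_subset)
  obtain ⟨x, hx, y, hy, z, hz3, hxy, hxz, hyz, hedge⟩ :=
    hs (U.biUnion φ) (U.biUnion φ) (Z ∪ (K.verts \ U).biUnion φ)
      (hM.biUnion_sub hU) (hM.biUnion_sub hU) hA3sub
      (by rw [hM.card_biUnion' hU]; omega) (by rw [hM.card_biUnion' hU]; omega) hz
  obtain ⟨a, ha, hxa⟩ := mem_biUnion.1 hx
  obtain ⟨b, hb, hyb⟩ := mem_biUnion.1 hy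
  -- locate z : either in Z or in a class outside U (it is not in a class of U or Z∪outside)
  by_cases hab : a = b
  · -- x, y both in class a : contradiction with Q
    subst hab
    have hzφa : z ∉ φ a := by
      intro hzin
      rcases Finset.mem_union.1 hz3 with h | h
      · exact Finset.disjoint_left.1 (hM.Z_disj a (hU ha)) hzin h
      · obtain ⟨c, hc, hzc⟩ := mem_biUnion.1 h
        have hc' := Finset.mem_sdiff.1 hc
        have hca : c ≠ a := fun h => hc'.2 (h ▸ ha)
        exact Finset.disjoint_left.1 (hM.class_disj c hc'.1 a (hU ha) hca) hzc hzin
    exact hM.Q a (hU ha) _ hedge (inter_pair_card hxy hxa hyb hzφa)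
  · rcases Finset.mem_union.1 hz3 with h | h
    · exact hM.Zp a (hU ha) b (hU hb) hab x hxa y hyb z h hedge
    · obtain ⟨c, hc, hzc⟩ := mem_biUnion.1 h
      have hc' := Finset.mem_sdiff.1 hc
      have hca : c ≠ a := fun h => hc'.2 (h ▸ ha)
      have hcb : c ≠ b := fun h => hc'.2 (h ▸ hb)
      have hKedge := hM.M a (hU ha) b (hU hb) c hc'.1 hab hca.symm hcb.symm
        x hxa y hyb z hzc hedge
      exact hcoll _ hKedge (inter_pair_card hab ha hb hc'.2)
lemma base_zero {G t K φ Z} (hs : SpreadT G t) (ht : 1 ≤ t) (hM : GoodModel G t K φ Z)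
    (hn : 10 * t ≤ G.verts.card) (hK : Tripartite K) : False := by
  obtain ⟨V1, V2, V3, d12, d13, d23, huni, hedge⟩ := hK
  have key : ∀ P1 P2 P3 : Finset ℕ, Disjoint (P1 ∪ P2) P3 → P1 ∪ P2 ⊆ K.verts →
      (∀ e ∈ K.edges, (e ∩ P3).card = 1) →
      5 * t ≤ ∑ a ∈ P1 ∪ P2, (φ a).card → False := by
    intro P1 P2 P3 hd hsub he hw
    apply helperA hs ht hM hsub hw
    intro a ha b hb c hc hKe
    have h1 := he _ hKe
    rw [inter_none (Finset.disjoint_left.1 hd ha) (Finset.disjoint_left.1 hd hb)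
      (Finset.disjoint_left.1 hd hc)] at h1
    simp at h1
  have h12 : ∑ a ∈ V1 ∪ V2, (φ a).card = ∑ a ∈ V1, (φ a).card + ∑ a ∈ V2, (φ a).card :=
    Finset.sum_union d12
  have h13 : ∑ a ∈ V1 ∪ V3, (φ a).card = ∑ a ∈ V1, (φ a).card + ∑ a ∈ V3, (φ a).card :=
    Finset.sum_union d13
  have h23 : ∑ a ∈ V2 ∪ V3, (φ a).card = ∑ a ∈ V2, (φ a).card + ∑ a ∈ V3, (φ a).card :=
    Finset.sum_union d23
  have hd123 : Disjoint (V1 ∪ V2) V3 := Finset.disjoint_union_left.2 ⟨d13, d23⟩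
  have htot : ∑ a ∈ V1 ∪ V2, (φ a).card + ∑ a ∈ V3, (φ a).card
      = ∑ a ∈ K.verts, (φ a).card := by
    rw [← Finset.sum_union hd123, huni]
  have hbig := hM.weight_big hn
  have hsub12 : V1 ∪ V2 ⊆ K.verts := by
    rw [← huni]; exact Finset.subset_union_left
  have hsub3 : V3 ⊆ K.verts := by rw [← huni]; exact Finset.subset_union_right
  have hsub1 : V1 ⊆ K.verts := (Finset.subset_union_left).trans hsub12
  have hsub2 : V2 ⊆ K.verts := (Finset.subset_union_right).trans hsub12
  rcases le_or_gt (5 * t) (∑ a ∈ V1 ∪ V2, (φ a).card) with h | h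
  · exact key V1 V2 V3 hd123 hsub12 (fun e he => (hedge e he).2.2) h
  rcases le_or_gt (5 * t) (∑ a ∈ V1 ∪ V3, (φ a).card) with h' | h'
  · exact key V1 V3 V2 (Finset.disjoint_union_left.2 ⟨d12, d23.symm⟩)
      (Finset.union_subset hsub1 hsub3) (fun e he => (hedge e he).2.1) h'
  · have h'' : 5 * t ≤ ∑ a ∈ V2 ∪ V3, (φ a).card := by omega
    exact key V2 V3 V1 (Finset.disjoint_union_left.2 ⟨d12.symm, d13.symm⟩)
      (Finset.union_subset hsub2 hsub3) (fun e he => (hedge e he).1) h''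

lemma base_one {G t K φ Z} (hs : SpreadT G t) (ht : 1 ≤ t) (hM : GoodModel G t K φ Z)
    (hn : 10 * t ≤ G.verts.card) (hK : InU1 K) : False := by
  obtain ⟨W, hWsub, hWedge⟩ := hK
  by_cases hbig : 3 * t ≤ ∑ a ∈ W, (φ a).card
  · obtain ⟨u1, hu1, hu1a, hu1b⟩ := exists_mid t ht _ W
      (fun a ha => hM.class_small a (hWsub ha)) (by omega)
    have hsd : ∑ a ∈ W \ u1, (φ a).card + ∑ a ∈ u1, (φ a).card = ∑ a ∈ W, (φ a).card :=
      Finset.sum_sdiff hu1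
    obtain ⟨u2, hu2, hu2a, hu2b⟩ := exists_mid t ht _ (W \ u1)
      (fun a ha => hM.class_small a (hWsub (Finset.sdiff_subset ha))) (by omega)
    have hu1K : u1 ⊆ K.verts := hu1.trans hWsub
    have hu2W : u2 ⊆ W := hu2.trans Finset.sdiff_subset
    have hu2K : u2 ⊆ K.verts := hu2W.trans hWsub
    have hA1card : (u1.biUnion φ).card = ∑ a ∈ u1, (φ a).card := hM.card_biUnion' hu1K
    have hA2card : (u2.biUnion φ).card = ∑ a ∈ u2, (φ a).card := hM.card_biUnion' hu2K
    have hA3card : t ≤ (G.verts \ (u1.biUnion φ ∪ u2.biUnion φ)).card := by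
      have h1 : (u1.biUnion φ ∪ u2.biUnion φ).card
          ≤ (u1.biUnion φ).card + (u2.biUnion φ).card := Finset.card_union_le _ _
      have h2 : (G.verts \ (u1.biUnion φ ∪ u2.biUnion φ)).card
          = G.verts.card - (u1.biUnion φ ∪ u2.biUnion φ).card :=
        Finset.card_sdiff_of_subset (Finset.union_subset (hM.biUnion_sub hu1K) (hM.biUnion_sub hu2K))
      omega
    obtain ⟨x, hx, y, hy, z, hz, hxy, hxz, hyz, hedge⟩ :=
      hs (u1.biUnion φ) (u2.biUnion φ) (G.verts \ (u1.biUnion φ ∪ u2.biUnion φ))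
        (hM.biUnion_sub hu1K) (hM.biUnion_sub hu2K) Finset.sdiff_subset
        (by omega) (by omega) hA3card
    obtain ⟨a, ha, hxa⟩ := mem_biUnion.1 hx
    obtain ⟨b, hb, hyb⟩ := mem_biUnion.1 hy
    have hab : a ≠ b := fun h => (Finset.mem_sdiff.1 (hu2 hb)).2 (h ▸ ha)
    have hzv := Finset.mem_sdiff.1 hz
    rcases hM.locate hzv.1 with hzZ | ⟨c, hc, hzc⟩
    · exact hM.Zp a (hu1K ha) b (hu2K hb) hab x hxa y hyb z hzZ hedge
    · have hca : c ≠ a := by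
        rintro rfl
        exact hzv.2 (Finset.mem_union.2 (Or.inl (mem_biUnion.2 ⟨c, ha, hzc⟩)))
      have hcb : c ≠ b := by
        rintro rfl
        exact hzv.2 (Finset.mem_union.2 (Or.inr (mem_biUnion.2 ⟨c, hb, hzc⟩)))
      have hKe := hM.M a (hu1K ha) b (hu2K hb) c hc hab hca.symm hcb.symm
        x hxa y hyb z hzc hedge
      have h1 := hWedge _ hKe
      have h2 : ({a, b} : Finset ℕ) ⊆ ({a, b, c} : Finset ℕ) ∩ W := by
        intro w hw
        rcases Finset.mem_insert.1 hw with rfl | hw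
        · exact Finset.mem_inter.2 ⟨by simp, hu1 ha⟩
        · rw [Finset.mem_singleton] at hw
          subst hw
          exact Finset.mem_inter.2 ⟨by simp, hu2W hb⟩
      have h3 := Finset.card_le_card h2
      rw [Finset.card_pair hab] at h3
      omega
  · have hout : 5 * t ≤ ∑ a ∈ K.verts \ W, (φ a).card := by
      have hsd : ∑ a ∈ K.verts \ W, (φ a).card + ∑ a ∈ W, (φ a).card
          = ∑ a ∈ K.verts, (φ a).card := Finset.sum_sdiff hWsub
      have := hM.weight_big hn
      omega
    apply helperA hs ht hM Finset.sdiff_subset hout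
    intro a ha b hb c hc hKe
    have h1 := hWedge _ hKe
    rw [inter_none (Finset.mem_sdiff.1 ha).2 (Finset.mem_sdiff.1 hb).2
      (Finset.mem_sdiff.1 hc).2] at h1
    simp at h1

lemma model_F {G t K φ Z} (hM : GoodModel G t K φ Z) {F : ThreeGraph} {U : Finset ℕ}
    (hU : U ⊆ K.verts)
    (hcoll : ∀ e ∈ K.edges, (e ∩ U).card ≠ 2)
    (hFv : F.verts = U) (hFe : F.edges = K.edges.filter (fun e => e ⊆ U))
    (hz : (Z ∪ (K.verts \ U).biUnion φ).card < t) :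
    GoodModel G t F φ (Z ∪ (K.verts \ U).biUnion φ) := by
  constructor
  · intro a ha; rw [hFv] at ha; exact hM.class_sub a (hU ha)
  · intro a ha; rw [hFv] at ha; exact hM.class_ne a (hU ha)
  · intro a ha; rw [hFv] at ha; exact hM.class_small a (hU ha)
  · intro a ha b hb hab; rw [hFv] at ha hb
    exact hM.class_disj a (hU ha) b (hU hb) hab
  · exact hz
  · intro a ha; rw [hFv] at ha
    refine Finset.disjoint_union_right.2 ⟨hM.Z_disj a (hU ha), ?_⟩
    rw [Finset.disjoint_biUnion_right]
    intro c hc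
    have hc' := Finset.mem_sdiff.1 hc
    exact hM.class_disj a (hU ha) c hc'.1 (fun h => hc'.2 (h ▸ ha))
  · have hsplit : (K.verts \ U).biUnion φ ∪ F.verts.biUnion φ = K.verts.biUnion φ := by
      rw [hFv]
      ext w
      simp only [Finset.mem_union, Finset.mem_biUnion, Finset.mem_sdiff]
      constructor
      · rintro (⟨c, ⟨hc, _⟩, h⟩ | ⟨c, hc, h⟩)
        · exact ⟨c, hc, h⟩
        · exact ⟨c, hU hc, h⟩
      · rintro ⟨c, hc, h⟩
        by_cases hcU : c ∈ U
        · exact Or.inr ⟨c, hcU, h⟩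
        · exact Or.inl ⟨c, ⟨hc, hcU⟩, h⟩
    rw [Finset.union_assoc, hsplit]
    exact hM.cover
  · intro a ha b hb c hc hab hac hbc x hx y hy z hz' he
    rw [hFv] at ha hb hc
    rw [hFe]
    refine Finset.mem_filter.2
      ⟨hM.M a (hU ha) b (hU hb) c (hU hc) hab hac hbc x hx y hy z hz' he, ?_⟩
    intro w hw
    simp only [Finset.mem_insert, Finset.mem_singleton] at hw
    rcases hw with rfl | rfl | rfl <;> assumption
  · intro a ha; rw [hFv] at ha; exact hM.Q a (hU ha)
  · intro a ha b hb hab x hx y hy z hz' he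
    rw [hFv] at ha hb
    rcases Finset.mem_union.1 hz' with h | h
    · exact hM.Zp a (hU ha) b (hU hb) hab x hx y hy z h he
    · obtain ⟨c, hc, hzc⟩ := Finset.mem_biUnion.1 h
      have hc' := Finset.mem_sdiff.1 hc
      have hac' : a ≠ c := fun h' => hc'.2 (h' ▸ ha)
      have hbc' : b ≠ c := fun h' => hc'.2 (h' ▸ hb)
      have hKe := hM.M a (hU ha) b (hU hb) c hc'.1 hab hac' hbc' x hx y hy z hzc he
      exact hcoll _ hKe (inter_pair_card hab ha hb hc'.2)

lemma model_H {G t K φ Z} (hM : GoodModel G t K φ Z) {H : ThreeGraph} {U : Finset ℕ}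
    {v : ℕ} (hU : U ⊆ K.verts) (hU2 : 2 ≤ U.card)
    (hcoll : ∀ e ∈ K.edges, (e ∩ U).card ≠ 2)
    (hv : v ∉ K.verts)
    (hHv : H.verts = (K.verts \ U) ∪ {v})
    (hHe : H.edges = K.edges.filter (fun e => e ∩ U = ∅) ∪
      (K.edges.filter (fun e => (e ∩ U).card = 1)).image (fun e => (e \ U) ∪ {v}))
    (hw : ∑ a ∈ U, (φ a).card < t) :
    GoodModel G t H (fun a => if a = v then U.biUnion φ else φ a) Z := by
  set φ' := fun a => if a = v then U.biUnion φ else φ a with hφ'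
  have hmem : ∀ a, a ∈ H.verts ↔ a = v ∨ (a ∈ K.verts ∧ a ∉ U) := by
    intro a
    rw [hHv]
    simp only [Finset.mem_union, Finset.mem_sdiff, Finset.mem_singleton]
    tauto
  have hUBcard : (U.biUnion φ).card = ∑ a ∈ U, (φ a).card := hM.card_biUnion' hU
  have hkey : ∀ d p q x y z, d ∈ U → p ∈ K.verts → p ∉ U → q ∈ K.verts → q ∉ U → p ≠ q →
      x ∈ φ d → y ∈ φ p → z ∈ φ q → ({x, y, z} : Finset ℕ) ∈ G.edges →
      ({v, p, q} : Finset ℕ) ∈ H.edges := by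
    intro d p q x y z hd hp hpU hq hqU hpq hx hy hz he
    have hdp : d ≠ p := fun h => hpU (h ▸ hd)
    have hdq : d ≠ q := fun h => hqU (h ▸ hd)
    have hKe := hM.M d (hU hd) p hp q hq hdp hdq hpq x hx y hy z hz he
    rw [hHe]
    apply Finset.mem_union_right
    apply Finset.mem_image.2
    refine ⟨{d, p, q}, Finset.mem_filter.2 ⟨hKe, by rw [inter_single hd hpU hqU]; simp⟩, ?_⟩
    have hsd : ({d, p, q} : Finset ℕ) \ U = {p, q} := by
      ext w
      simp only [Finset.mem_sdiff, Finset.mem_insert, Finset.mem_singleton]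
      constructor
      · rintro ⟨rfl | rfl | rfl, hwU⟩
        · exact absurd hd hwU
        · exact Or.inl rfl
        · exact Or.inr rfl
      · rintro (rfl | rfl)
        · exact ⟨Or.inr (Or.inl rfl), hpU⟩
        · exact ⟨Or.inr (Or.inr rfl), hqU⟩
    rw [hsd]
    ext w; simp; tauto
  constructor
  · -- class_sub
    intro a ha
    rcases (hmem a).1 ha with rfl | ⟨haK, haU⟩
    · simp only [hφ', if_pos rfl]
      exact hM.biUnion_sub hU
    · have hav : a ≠ v := fun h => hv (h ▸ haK)
      simp only [hφ', if_neg hav]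
      exact hM.class_sub a haK
  · -- class_ne
    intro a ha
    rcases (hmem a).1 ha with rfl | ⟨haK, haU⟩
    · simp only [hφ', if_pos rfl]
      obtain ⟨d, hd⟩ := Finset.card_pos.1 (by omega : 0 < U.card)
      obtain ⟨x, hx⟩ := hM.class_ne d (hU hd)
      exact ⟨x, Finset.mem_biUnion.2 ⟨d, hd, hx⟩⟩
    · have hav : a ≠ v := fun h => hv (h ▸ haK)
      simp only [hφ', if_neg hav]
      exact hM.class_ne a haK
  · -- class_small
    intro a ha
    rcases (hmem a).1 ha with rfl | ⟨haK, haU⟩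
    · simp only [hφ', if_pos rfl]
      omega
    · have hav : a ≠ v := fun h => hv (h ▸ haK)
      simp only [hφ', if_neg hav]
      exact hM.class_small a haK
  · -- class_disj
    intro a ha b hb hab
    rcases (hmem a).1 ha with hav | ⟨haK, haU⟩
    · rcases (hmem b).1 hb with hbv | ⟨hbK, hbU⟩
      · exact absurd (hav.trans hbv.symm) hab
      · have hbv : b ≠ v := fun h => hv (h ▸ hbK)
        simp only [hφ', if_pos hav, if_neg hbv]
        rw [Finset.disjoint_biUnion_left]
        intro d hd
        exact hM.class_disj d (hU hd) b hbK (fun h => hbU (h ▸ hd))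
    · have hav : a ≠ v := fun h => hv (h ▸ haK)
      rcases (hmem b).1 hb with hbv | ⟨hbK, hbU⟩
      · simp only [hφ', if_pos hbv, if_neg hav]
        rw [Finset.disjoint_biUnion_right]
        intro d hd
        exact hM.class_disj a haK d (hU hd) (fun h => haU (h ▸ hd))
      · have hbv : b ≠ v := fun h => hv (h ▸ hbK)
        simp only [hφ', if_neg hav, if_neg hbv]
        exact hM.class_disj a haK b hbK hab
  · exact hM.Z_small
  · -- Z_disj
    intro a ha
    rcases (hmem a).1 ha with rfl | ⟨haK, haU⟩
    · simp only [hφ', if_pos rfl]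
      rw [Finset.disjoint_biUnion_left]
      intro d hd
      exact hM.Z_disj d (hU hd)
    · have hav : a ≠ v := fun h => hv (h ▸ haK)
      simp only [hφ', if_neg hav]
      exact hM.Z_disj a haK
  · -- cover
    have hBU : H.verts.biUnion φ' = K.verts.biUnion φ := by
      ext w
      simp only [Finset.mem_biUnion]
      constructor
      · rintro ⟨a, ha, hw'⟩
        rcases (hmem a).1 ha with rfl | ⟨haK, haU⟩
        · rw [hφ'] at hw'
          simp only [if_pos rfl] at hw'
          obtain ⟨d, hd, hwd⟩ := Finset.mem_biUnion.1 hw'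
          exact ⟨d, hU hd, hwd⟩
        · have hav : a ≠ v := fun h => hv (h ▸ haK)
          rw [hφ'] at hw'
          simp only [if_neg hav] at hw'
          exact ⟨a, haK, hw'⟩
      · rintro ⟨a, ha, hw'⟩
        by_cases haU : a ∈ U
        · refine ⟨v, (hmem v).2 (Or.inl rfl), ?_⟩
          rw [hφ']
          simp only [if_pos rfl]
          exact Finset.mem_biUnion.2 ⟨a, haU, hw'⟩
        · have hav : a ≠ v := fun h => hv (h ▸ ha)
          refine ⟨a, (hmem a).2 (Or.inr ⟨ha, haU⟩), ?_⟩
          rw [hφ']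
          simp only [if_neg hav]
          exact hw'
    rw [hBU]
    exact hM.cover
  · -- M
    intro a ha b hb c hc hab hac hbc x hx y hy z hz he
    by_cases hav : a = v
    · have hbv : b ≠ v := fun h => hab (hav.trans h.symm)
      have hcv : c ≠ v := fun h => hac (hav.trans h.symm)
      obtain ⟨hbK, hbU⟩ := ((hmem b).1 hb).resolve_left hbv
      obtain ⟨hcK, hcU⟩ := ((hmem c).1 hc).resolve_left hcv
      simp only [hφ', if_pos hav] at hx
      simp only [hφ', if_neg hbv] at hy
      simp only [hφ', if_neg hcv] at hz
      obtain ⟨d, hd, hxd⟩ := Finset.mem_biUnion.1 hx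
      rw [hav]
      exact hkey d b c x y z hd hbK hbU hcK hcU hbc hxd hy hz he
    · have ⟨haK, haU⟩ := ((hmem a).1 ha).resolve_left hav
      simp only [hφ', if_neg hav] at hx
      by_cases hbv : b = v
      · have hcv : c ≠ v := fun h => hbc (hbv.trans h.symm)
        obtain ⟨hcK, hcU⟩ := ((hmem c).1 hc).resolve_left hcv
        simp only [hφ', if_pos hbv] at hy
        simp only [hφ', if_neg hcv] at hz
        obtain ⟨d, hd, hyd⟩ := Finset.mem_biUnion.1 hy
        have hres := hkey d a c y x z hd haK haU hcK hcU hac hyd hx hz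
          (by rw [← triple_swap12]; exact he)
        rw [hbv, triple_swap12]
        exact hres
      · simp only [hφ', if_neg hbv] at hy
        have ⟨hbK, hbU⟩ := ((hmem b).1 hb).resolve_left hbv
        by_cases hcv : c = v
        · simp only [hφ', if_pos hcv] at hz
          obtain ⟨d, hd, hzd⟩ := Finset.mem_biUnion.1 hz
          have hres := hkey d a b z x y hd haK haU hbK hbU hab hzd hx hy
            (by rw [← triple_rot]; exact he)
          rw [hcv, triple_rot]
          exact hres
        · have ⟨hcK, hcU⟩ := ((hmem c).1 hc).resolve_left hcv
          simp only [hφ', if_neg hcv] at hz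
          have hKe := hM.M a haK b hbK c hcK hab hac hbc x hx y hy z hz he
          rw [hHe]
          exact Finset.mem_union_left _
            (Finset.mem_filter.2 ⟨hKe, inter_none haU hbU hcU⟩)
  · -- Q
    intro a ha e he
    rcases (hmem a).1 ha with rfl | ⟨haK, haU⟩
    · simp only [hφ', if_pos rfl]
      intro h2
      have he3 := G.edge_card e he
      set S := U.biUnion φ with hS
      obtain ⟨x, y, hxy, hpair⟩ := Finset.card_eq_two.1 h2
      have hx : x ∈ e ∩ S := by rw [hpair]; simp
      have hy : y ∈ e ∩ S := by rw [hpair]; simp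
      have hxe := (Finset.mem_inter.1 hx).1
      have hxS := (Finset.mem_inter.1 hx).2
      have hye := (Finset.mem_inter.1 hy).1
      have hyS := (Finset.mem_inter.1 hy).2
      have h1 : (e \ (e ∩ S)).card = 1 := by
        rw [Finset.card_sdiff_of_subset Finset.inter_subset_left]
        omega
      obtain ⟨z, hzeq⟩ := Finset.card_eq_one.1 h1
      have hzmem : z ∈ e \ (e ∩ S) := by rw [hzeq]; simp
      have hze : z ∈ e := (Finset.mem_sdiff.1 hzmem).1
      have hzS : z ∉ S := fun h => (Finset.mem_sdiff.1 hzmem).2 (Finset.mem_inter.2 ⟨hze, h⟩)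
      have hxz : x ≠ z := fun h => hzS (h ▸ hxS)
      have hyz : y ≠ z := fun h => hzS (h ▸ hyS)
      have hesub : ({x, y, z} : Finset ℕ) ⊆ e := by
        intro w hw
        simp only [Finset.mem_insert, Finset.mem_singleton] at hw
        rcases hw with rfl | rfl | rfl
        exacts [hxe, hye, hze]
      have heeq : ({x, y, z} : Finset ℕ) = e :=
        Finset.eq_of_subset_of_card_le hesub (by rw [triple_card hxy hxz hyz]; omega)
      have hedge' : ({x, y, z} : Finset ℕ) ∈ G.edges := by rw [heeq]; exact he
      obtain ⟨d, hd, hxd⟩ := Finset.mem_biUnion.1 hxS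
      obtain ⟨d', hd', hyd'⟩ := Finset.mem_biUnion.1 hyS
      by_cases hdd : d = d'
      · subst hdd
        have hzd : z ∉ φ d := fun h => hzS (Finset.mem_biUnion.2 ⟨d, hd, h⟩)
        exact hM.Q d (hU hd) _ hedge' (inter_pair_card hxy hxd hyd' hzd)
      · have hzG : z ∈ G.verts := G.edge_sub e he hze
        rcases hM.locate hzG with hzZ | ⟨c, hcK, hzc⟩
        · exact hM.Zp d (hU hd) d' (hU hd') hdd x hxd y hyd' z hzZ hedge'
        · have hcU : c ∉ U := fun h => hzS (Finset.mem_biUnion.2 ⟨c, h, hzc⟩)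
          have hdc : d ≠ c := fun h => hcU (h ▸ hd)
          have hd'c : d' ≠ c := fun h => hcU (h ▸ hd')
          have hKe := hM.M d (hU hd) d' (hU hd') c hcK hdd hdc hd'c
            x hxd y hyd' z hzc hedge'
          exact hcoll _ hKe (inter_pair_card hdd hd hd' hcU)
    · have hav : a ≠ v := fun h => hv (h ▸ haK)
      simp only [hφ', if_neg hav]
      exact hM.Q a haK e he
  · -- Zp
    intro a ha b hb hab x hx y hy z hzZ
    by_cases hav : a = v
    · simp only [hφ', if_pos hav] at hx
      obtain ⟨d, hd, hxd⟩ := Finset.mem_biUnion.1 hx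
      have hbv : b ≠ v := fun h => hab (hav.trans h.symm)
      obtain ⟨hbK, hbU⟩ := ((hmem b).1 hb).resolve_left hbv
      simp only [hφ', if_neg hbv] at hy
      exact hM.Zp d (hU hd) b hbK (fun h => hbU (h ▸ hd)) x hxd y hy z hzZ
    · have ⟨haK, haU⟩ := ((hmem a).1 ha).resolve_left hav
      simp only [hφ', if_neg hav] at hx
      by_cases hbv : b = v
      · simp only [hφ', if_pos hbv] at hy
        obtain ⟨d, hd, hyd⟩ := Finset.mem_biUnion.1 hy
        exact hM.Zp a haK d (hU hd) (fun h => haU (h ▸ hd)) x hx y hyd z hzZ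
      · have ⟨hbK, _⟩ := ((hmem b).1 hb).resolve_left hbv
        simp only [hφ', if_neg hbv] at hy
        exact hM.Zp a haK b hbK hab x hx y hy z hzZ

theorem no_model {G : ThreeGraph} {t : ℕ} (hs : SpreadT G t) (ht : 1 ≤ t)
    (hn : 10 * t ≤ G.verts.card) :
    ∀ i K, MemU i K → ∀ φ Z, GoodModel G t K φ Z → False := by
  intro i K h
  induction h with
  | zero K hK => intro φ Z hM; exact base_zero hs ht hM hn hK
  | one K hK => intro φ Z hM; exact base_one hs ht hM hn hK
  | mono i K h ih => exact ih
  | reduce i K H F hred hH hF ihH ihF =>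
    intro φ Z hM
    obtain ⟨U, v, hUsub, hU2, hUlt, hcoll, hv, hHv, hHe, hFv, hFe⟩ := hred
    by_cases hw : ∑ a ∈ U, (φ a).card < t
    · exact ihH _ _ (model_H hM hUsub hU2 hcoll hv hHv hHe hw)
    · by_cases hz : (Z ∪ (K.verts \ U).biUnion φ).card < t
      · exact ihF _ _ (model_F hM hUsub hcoll hFv hFe hz)
      · exact contra_reduce hs hM hUsub hcoll (le_of_not_gt hw) (le_of_not_gt hz)

/-- Let `G` be a 3-graph on `n` vertices such that for all
`A₁, A₂, A₃ ⊆ V(G)`, each of size at least `n/100`, there is an edge `e = {x, y, z}` with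
`x ∈ A₁`, `y ∈ A₂`, `z ∈ A₃` (and `x, y, z` distinct). Then `G ∉ 𝒰`. -/
theorem stmt12 (G : ThreeGraph)
    (hspread : ∀ A1 A2 A3 : Finset ℕ, A1 ⊆ G.verts → A2 ⊆ G.verts → A3 ⊆ G.verts →
      (G.verts.card : ℝ) / 100 ≤ (A1.card : ℝ) →
      (G.verts.card : ℝ) / 100 ≤ (A2.card : ℝ) →
      (G.verts.card : ℝ) / 100 ≤ (A3.card : ℝ) →
      ∃ e ∈ G.edges, ∃ x ∈ A1, ∃ y ∈ A2, ∃ z ∈ A3,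
        x ≠ y ∧ x ≠ z ∧ y ≠ z ∧ e = {x, y, z}) :
    ¬ InU G := by
  rintro ⟨i, hMem⟩
  by_cases hsmall : G.verts.card ≤ 100
  · -- small case: the spread hypothesis is itself contradictory
    rcases Finset.eq_empty_or_nonempty G.verts with hemp | ⟨x₀, hx₀⟩
    · have hn0 : G.verts.card = 0 := by rw [hemp]; rfl
      obtain ⟨e, -, x, hx, -⟩ := hspread ∅ ∅ ∅ (Finset.empty_subset _)
        (Finset.empty_subset _) (Finset.empty_subset _)
        (by rw [hn0]; norm_num) (by rw [hn0]; norm_num) (by rw [hn0]; norm_num)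
      exact absurd hx (Finset.notMem_empty x)
    · have h1 : (G.verts.card : ℝ) / 100 ≤ (({x₀} : Finset ℕ).card : ℝ) := by
        rw [Finset.card_singleton]
        push_cast
        rw [div_le_one (by norm_num : (0:ℝ) < 100)]
        exact_mod_cast hsmall
      obtain ⟨e, he, x, hx, y, hy, z, hz, hxy, -⟩ := hspread {x₀} {x₀} {x₀}
        (Finset.singleton_subset_iff.2 hx₀) (Finset.singleton_subset_iff.2 hx₀)
        (Finset.singleton_subset_iff.2 hx₀) h1 h1 h1
      rw [Finset.mem_singleton] at hx hy
      exact hxy (hx.trans hy.symm)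
  · -- main case
    set n := G.verts.card with hndef
    set t := n / 100 + 1 with htdef
    have hmod := Nat.div_add_mod n 100
    have hmodlt : n % 100 < 100 := Nat.mod_lt _ (by norm_num)
    have hdiv1 : 1 ≤ n / 100 := by omega
    have ht : 1 ≤ t := by omega
    have h100 : n < 100 * t := by omega
    have hn10 : 10 * t ≤ n := by omega
    have hs : SpreadT G t := by
      intro A1 A2 A3 h1 h2 h3 c1 c2 c3
      have key : ∀ A : Finset ℕ, t ≤ A.card → (n : ℝ) / 100 ≤ (A.card : ℝ) := by
        intro A hA
        have h4 : n ≤ 100 * A.card := by omega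
        have h5 : (n : ℝ) ≤ 100 * (A.card : ℝ) := by exact_mod_cast h4
        linarith
      obtain ⟨e, he, x, hx, y, hy, z, hz, hxy, hxz, hyz, heq⟩ :=
        hspread A1 A2 A3 h1 h2 h3 (key _ c1) (key _ c2) (key _ c3)
      exact ⟨x, hx, y, hy, z, hz, hxy, hxz, hyz, heq ▸ he⟩
    refine no_model hs ht hn10 i G hMem (fun x => {x}) ∅ ?_
    constructor
    · intro a ha
      simpa using ha
    · intro a _
      exact ⟨a, Finset.mem_singleton_self a⟩
    · intro a _
      rw [Finset.card_singleton]
      omega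
    · intro a _ b _ hab
      simp [hab, hab.symm]
    · rw [Finset.card_empty]
      omega
    · intro a _
      simp
    · ext w
      simp
    · intro a _ b _ c _ _ _ _ x hx y hy z hz he
      rw [Finset.mem_singleton] at hx hy hz
      rw [← hx, ← hy, ← hz]
      exact he
    · intro a _ e _ hcard
      have h1 : (e ∩ {a}).card ≤ 1 := by
        refine le_trans (Finset.card_le_card Finset.inter_subset_right) ?_
        rw [Finset.card_singleton]
      omega
    · intro a _ b _ _ x _ y _ z hz
      exact absurd hz (Finset.notMem_empty z)
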